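/- Define f(n,k) = Σ_{j∈ℤ} (−1)^j q^{j(3j−1)/2} [n choose k−j]_q [n choose k+j]_q. Then for all n ≥ 1 and all k, f(n,k) = f(n−1,k) + q^{n−k} f(n−1,k−1). -/

import Mathlib

open LaurentPolynomial

/-- The Gaussian (q-)binomial coefficient `[n choose k]_q`, as a Laurent polynomial in `q`,
with the convention that it vanishes for `k < 0` or `k > n`.  Defined via the standard
Pascal-type recurrence `[n+1, k] = q^k [n, k] + [n, k-1]`. -/
noncomputable def qb : ℕ → ℤ → LaurentPolynomial ℤ
  | 0, k => if k = 0 then 1 else 0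
  | (n+1), k => T k * qb n k + qb n (k-1)

/-- The variable `q`. -/
noncomputable def q : LaurentPolynomial ℤ := T 1

/-- `f n k = Σ_{j∈ℤ} (−1)^j q^{j(3j−1)/2} [n choose k−j]_q [n choose k+j]_q`. -/
noncomputable def f (n : ℕ) (k : ℤ) : LaurentPolynomial ℤ :=
  ∑ᶠ j : ℤ, (-1 : LaurentPolynomial ℤ) ^ j.natAbs * T (j * (3 * j - 1) / 2) *
    qb n (k - j) * qb n (k + j)


lemma qb_succ (n : ℕ) (k : ℤ) : qb (n+1) k = T k * qb n k + qb n (k-1) := rfl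

lemma qb_eq_zero_of_neg (n : ℕ) : ∀ k : ℤ, k < 0 → qb n k = 0 := by
  induction n with
  | zero => intro k hk; simp only [qb]; rw [if_neg (by omega)]
  | succ n ih => intro k hk; rw [qb_succ, ih k hk, ih (k-1) (by omega), mul_zero, zero_add]

lemma qb_eq_zero_of_gt (n : ℕ) : ∀ k : ℤ, (n:ℤ) < k → qb n k = 0 := by
  induction n with
  | zero => intro k hk; simp only [qb]; rw [if_neg (by omega)]
  | succ n ih =>
    intro k hk
    push_cast at hk
    rw [qb_succ, ih k (by omega), ih (k-1) (by omega), mul_zero, zero_add]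

lemma hTT : (T 1 : LaurentPolynomial ℤ) * T (-1) = 1 := by
  rw [← T_add]; norm_num

lemma qb_star (m : ℕ) : ∀ k : ℤ,
    (T k - 1) * qb m k = (T ((m:ℤ)+1-k) - 1) * qb m (k-1) := by
  induction m with
  | zero =>
    intro k
    rcases eq_or_ne k 0 with rfl | h0
    · have : ((-1 : ℤ)) ≠ 0 := by norm_num
      simp only [qb, if_pos rfl, zero_sub, if_neg this]
      simp [T_zero]
    rcases eq_or_ne k 1 with rfl | h1
    · simp only [qb, if_neg (by norm_num : (1:ℤ) ≠ 0), if_pos (by norm_num : (1:ℤ)-1 = 0)]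
      simp
    · simp only [qb, if_neg h0, if_neg (by omega : k - 1 ≠ 0)]
      simp
  | succ m ih =>
    intro k
    have h1 := ih k
    have h2 := ih (k-1)
    rw [qb_succ, qb_succ]
    push_cast
    rw [show ((m:ℤ)+1+1-k) = ((m:ℤ)+1-k)+1 by ring, T_add]
    rw [show (m:ℤ)+1-(k-1) = ((m:ℤ)+1-k)+1 by ring, T_add] at h2
    rw [show (T (k-1) : LaurentPolynomial ℤ) = T k * T (-1) by rw [sub_eq_add_neg, T_add]] at h2 ⊢
    linear_combination (T k) * h1 + h2 - (T k * T ((m:ℤ)+1-k) * qb m (k-1)) * hTT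

lemma qb_pascal2 (m : ℕ) (k : ℤ) :
    qb (m+1) k = qb m k + T ((m:ℤ)+1-k) * qb m (k-1) := by
  rw [qb_succ]
  linear_combination qb_star m k

notation "LP" => LaurentPolynomial ℤ

lemma e_neg (j : ℤ) : (-j) * (3 * (-j) - 1) / 2 = j * (3*j-1)/2 + j := by
  rw [show (-j) * (3 * (-j) - 1) = j * (3*j-1) + j * 2 by ring,
    Int.add_mul_ediv_right _ _ (by norm_num : (2:ℤ) ≠ 0)]

lemma e_one_sub (j : ℤ) : (1-j) * (3 * (1-j) - 1) / 2 = j * (3*j-1)/2 + (1 - 2*j) := by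
  rw [show (1-j) * (3 * (1-j) - 1) = j * (3*j-1) + (1-2*j) * 2 by ring,
    Int.add_mul_ediv_right _ _ (by norm_num : (2:ℤ) ≠ 0)]

lemma s_neg (j : ℤ) : ((-1 : LP)) ^ (-j).natAbs = (-1) ^ j.natAbs := by
  rw [Int.natAbs_neg]

lemma s_one_sub (j : ℤ) : ((-1 : LP)) ^ (1-j).natAbs = -((-1) ^ j.natAbs) := by
  rcases Int.even_or_odd j with h | h
  · have h1 : Odd (1 - j) := by rcases h with ⟨t, rfl⟩; exact ⟨-t, by ring⟩
    rw [(Int.natAbs_odd.2 h1).neg_one_pow, (Int.natAbs_even.2 h).neg_one_pow]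
  · have h1 : Even (1 - j) := by rcases h with ⟨t, rfl⟩; exact ⟨-t, by ring⟩
    rw [(Int.natAbs_even.2 h1).neg_one_pow, (Int.natAbs_odd.2 h).neg_one_pow, neg_neg]

lemma supp_fin (m : ℕ) (a : ℤ) (c d : ℤ → LP) :
    (Function.support fun j : ℤ => c j * qb m (a - j) * d j).Finite := by
  apply (Set.finite_Icc (a - (m:ℤ)) a).subset
  intro j hj
  simp only [Function.mem_support] at hj
  simp only [Set.mem_Icc]
  by_contra hc
  push_neg at hc
  apply hj
  have h0 : qb m (a - j) = 0 := by
    rcases lt_or_ge j (a - (m:ℤ)) with h | h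
    · exact qb_eq_zero_of_gt m _ (by omega)
    · exact qb_eq_zero_of_neg m _ (by have := hc h; omega)
  rw [h0, mul_zero, zero_mul]


lemma finsum_reindex_neg (F : ℤ → LP) : ∑ᶠ j : ℤ, F (-j) = ∑ᶠ j : ℤ, F j := by
  have := finsum_comp_equiv (Equiv.neg ℤ) (f := F)
  simpa using this

lemma finsum_antisym (F : ℤ → LP) (h : ∀ j, F (1 - j) = - F j) : ∑ᶠ j : ℤ, F j = 0 := by
  have h1 : ∑ᶠ j : ℤ, F (1 - j) = ∑ᶠ j : ℤ, F j := by
    have := finsum_comp_equiv (Equiv.subLeft (1:ℤ)) (f := F)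
    simpa using this
  have h2 : ∑ᶠ j : ℤ, F (1 - j) = -∑ᶠ j : ℤ, F j := by
    rw [finsum_congr h, finsum_neg_distrib]
  have h5 : (∑ᶠ j : ℤ, F j) = -∑ᶠ j : ℤ, F j := h1.symm.trans h2
  have h3 : (∑ᶠ j : ℤ, F j) + (∑ᶠ j : ℤ, F j) = 0 := by
    nth_rewrite 1 [h5]; ring
  have h4 : (2:ℤ) • (∑ᶠ j : ℤ, F j) = 0 := by rw [two_smul]; exact h3
  have h6 := by simpa using h4
  rcases h6 with h' | h'
  · exfalso
    have hmap : (Polynomial.toLaurent (2 : Polynomial ℤ)) = (2 : LP) := by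
      exact map_ofNat _ 2
    rw [← hmap] at h'
    exact Polynomial.toLaurent_ne_zero.2 (by norm_num) h'
  · exact h'

lemma fin_mul_left (r : LP) {G : ℤ → LP} (hG : (Function.support G).Finite) :
    (Function.support fun j : ℤ => r * G j).Finite := by
  apply hG.subset
  intro j hj
  simp only [Function.mem_support] at hj ⊢
  exact fun h0 => hj (by rw [h0, mul_zero])

lemma fin_sub {F G : ℤ → LP} (hF : (Function.support F).Finite)
    (hG : (Function.support G).Finite) :
    (Function.support fun j : ℤ => F j - G j).Finite := by
  apply (hF.union hG).subset
  intro j hj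
  simp only [Function.mem_support] at hj
  by_contra hc
  simp only [Set.mem_union, Function.mem_support, not_or, not_not] at hc
  exact hj (by rw [hc.1, hc.2, sub_zero])

lemma fin_add {F G : ℤ → LP} (hF : (Function.support F).Finite)
    (hG : (Function.support G).Finite) :
    (Function.support fun j : ℤ => F j + G j).Finite := by
  apply (hF.union hG).subset
  intro j hj
  simp only [Function.mem_support] at hj
  by_contra hc
  simp only [Set.mem_union, Function.mem_support, not_or, not_not] at hc
  exact hj (by rw [hc.1, hc.2, add_zero])

lemma keyQ (m : ℕ) (k : ℤ) :
    (∑ᶠ j : ℤ, (-1 : LP) ^ j.natAbs * T (j * (3 * j - 1) / 2) * qb m (k - j) * qb m (k - 1 + j))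
      = (1 - T ((m:ℤ) + 1 - k)) * f m (k - 1) := by
  have hfinR : (Function.support fun j : ℤ => (-1 : LP) ^ j.natAbs * T (j * (3 * j - 1) / 2) *
      qb m (k - 1 - j) * qb m (k - 1 + j)).Finite :=
    supp_fin m (k-1) (fun j => (-1 : LP) ^ j.natAbs * T (j * (3 * j - 1) / 2))
      (fun j => qb m (k - 1 + j))
  have hfinU : (Function.support fun j : ℤ => (-1 : LP) ^ j.natAbs * T (j * (3 * j - 1) / 2) *
      T (k - j) * qb m (k - j) * qb m (k - 1 + j)).Finite :=
    supp_fin m k (fun j => (-1 : LP) ^ j.natAbs * T (j * (3 * j - 1) / 2) * T (k - j))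
      (fun j => qb m (k - 1 + j))
  have hfinV : (Function.support fun j : ℤ => (-1 : LP) ^ j.natAbs * T (j * (3 * j - 1) / 2) *
      T j * qb m (k - 1 - j) * qb m (k - 1 + j)).Finite :=
    supp_fin m (k-1) (fun j => (-1 : LP) ^ j.natAbs * T (j * (3 * j - 1) / 2) * T j)
      (fun j => qb m (k - 1 + j))
  have hpt : ∀ j : ℤ, (-1 : LP) ^ j.natAbs * T (j * (3 * j - 1) / 2) * qb m (k - j) * qb m (k - 1 + j)
      = ((-1 : LP) ^ j.natAbs * T (j * (3 * j - 1) / 2) * qb m (k - 1 - j) * qb m (k - 1 + j))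
        + (((-1 : LP) ^ j.natAbs * T (j * (3 * j - 1) / 2) * T (k - j) * qb m (k - j) * qb m (k - 1 + j))
          - T ((m:ℤ) + 1 - k) * ((-1 : LP) ^ j.natAbs * T (j * (3 * j - 1) / 2) * T j *
              qb m (k - 1 - j) * qb m (k - 1 + j))) := by
    intro j
    have h := qb_star m (k - j)
    rw [show (m:ℤ) + 1 - (k - j) = ((m:ℤ) + 1 - k) + j by ring, T_add,
      show k - j - 1 = k - 1 - j by ring] at h
    linear_combination (-((-1 : LP) ^ j.natAbs * T (j * (3 * j - 1) / 2) * qb m (k - 1 + j))) * h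
  rw [finsum_congr hpt, finsum_add_distrib hfinR (fin_sub hfinU (fin_mul_left _ hfinV)),
    finsum_sub_distrib hfinU (fin_mul_left _ hfinV),
    ← mul_finsum _ (T ((m:ℤ) + 1 - k))]
  have hU0 : (∑ᶠ j : ℤ, (-1 : LP) ^ j.natAbs * T (j * (3 * j - 1) / 2) * T (k - j) *
      qb m (k - j) * qb m (k - 1 + j)) = 0 := by
    apply finsum_antisym
    intro j
    rw [s_one_sub, e_one_sub, show k - (1 - j) = k - 1 + j by ring,
      show k - 1 + (1 - j) = k - j by ring]
    have hT : (T (j * (3 * j - 1) / 2 + (1 - 2 * j)) : LP) * T (k - (1 - j))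
        = T (j * (3 * j - 1) / 2) * T (k - j) := by
      rw [← T_add, ← T_add]; congr 1; ring
    rw [show k - (1 - j) = k - 1 + j by ring] at hT
    linear_combination (-((-1 : LP) ^ j.natAbs * qb m (k - 1 + j) * qb m (k - j))) * hT
  have hV : (∑ᶠ j : ℤ, (-1 : LP) ^ j.natAbs * T (j * (3 * j - 1) / 2) * T j *
      qb m (k - 1 - j) * qb m (k - 1 + j))
      = ∑ᶠ j : ℤ, (-1 : LP) ^ j.natAbs * T (j * (3 * j - 1) / 2) *
        qb m (k - 1 - j) * qb m (k - 1 + j) := by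
    rw [← finsum_reindex_neg (fun j : ℤ => (-1 : LP) ^ j.natAbs * T (j * (3 * j - 1) / 2) * T j *
      qb m (k - 1 - j) * qb m (k - 1 + j))]
    apply finsum_congr
    intro j
    rw [s_neg, e_neg, show k - 1 - -j = k - 1 + j by ring, show k - 1 + -j = k - 1 - j by ring]
    have hT2 : (T (j * (3 * j - 1) / 2 + j) : LP) * T (-j) = T (j * (3 * j - 1) / 2) := by
      rw [← T_add]; congr 1; ring
    linear_combination ((-1 : LP) ^ j.natAbs * qb m (k - 1 + j) * qb m (k - 1 - j)) * hT2
  have hR : (∑ᶠ j : ℤ, (-1 : LP) ^ j.natAbs * T (j * (3 * j - 1) / 2) *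
      qb m (k - 1 - j) * qb m (k - 1 + j)) = f m (k - 1) := rfl
  rw [hU0, hV, hR]
  ring

lemma key (m : ℕ) (k : ℤ) : f (m+1) k = f m k + T ((m:ℤ) + 1 - k) * f m (k-1) := by
  have hfin1 : (Function.support fun j : ℤ => (-1 : LP) ^ j.natAbs * T (j * (3 * j - 1) / 2) *
      qb m (k - j) * qb m (k + j)).Finite :=
    supp_fin m k (fun j => (-1 : LP) ^ j.natAbs * T (j * (3 * j - 1) / 2))
      (fun j => qb m (k + j))
  have hfinP : (Function.support fun j : ℤ => (-1 : LP) ^ j.natAbs * T (j * (3 * j - 1) / 2) *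
      T (-j) * qb m (k - j) * qb m (k - 1 + j)).Finite :=
    supp_fin m k (fun j => (-1 : LP) ^ j.natAbs * T (j * (3 * j - 1) / 2) * T (-j))
      (fun j => qb m (k - 1 + j))
  have hfinG : (Function.support fun j : ℤ => (-1 : LP) ^ j.natAbs * T (j * (3 * j - 1) / 2) *
      T j * qb m (k - 1 - j) * qb m (k + j)).Finite :=
    supp_fin m (k-1) (fun j => (-1 : LP) ^ j.natAbs * T (j * (3 * j - 1) / 2) * T j)
      (fun j => qb m (k + j))
  have hfinR : (Function.support fun j : ℤ => (-1 : LP) ^ j.natAbs * T (j * (3 * j - 1) / 2) *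
      qb m (k - 1 - j) * qb m (k - 1 + j)).Finite :=
    supp_fin m (k-1) (fun j => (-1 : LP) ^ j.natAbs * T (j * (3 * j - 1) / 2))
      (fun j => qb m (k - 1 + j))
  have hpt : ∀ j : ℤ, (-1 : LP) ^ j.natAbs * T (j * (3 * j - 1) / 2) * qb (m+1) (k - j) * qb (m+1) (k + j)
      = ((-1 : LP) ^ j.natAbs * T (j * (3 * j - 1) / 2) * qb m (k - j) * qb m (k + j))
        + ((T ((m:ℤ) + 1 - k) * ((-1 : LP) ^ j.natAbs * T (j * (3 * j - 1) / 2) * T (-j) *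
            qb m (k - j) * qb m (k - 1 + j)))
          + ((T ((m:ℤ) + 1 - k) * ((-1 : LP) ^ j.natAbs * T (j * (3 * j - 1) / 2) * T j *
              qb m (k - 1 - j) * qb m (k + j)))
            + ((T ((m:ℤ) + 1 - k) * T ((m:ℤ) + 1 - k)) * ((-1 : LP) ^ j.natAbs *
                T (j * (3 * j - 1) / 2) * qb m (k - 1 - j) * qb m (k - 1 + j))))) := by
    intro j
    rw [qb_pascal2 m (k - j), qb_pascal2 m (k + j)]
    have hTa : (T ((m:ℤ) + 1 - (k - j)) : LP) = T ((m:ℤ) + 1 - k) * T j := by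
      rw [← T_add]; congr 1; ring
    have hTb : (T ((m:ℤ) + 1 - (k + j)) : LP) = T ((m:ℤ) + 1 - k) * T (-j) := by
      rw [← T_add]; congr 1; ring
    rw [hTa, hTb, show k - j - 1 = k - 1 - j by ring, show k + j - 1 = k - 1 + j by ring]
    have hTjj : (T j : LP) * T (-j) = 1 := by
      rw [← T_add, show j + -j = 0 by ring, T_zero]
    linear_combination ((-1 : LP) ^ j.natAbs * T (j * (3 * j - 1) / 2) * T ((m:ℤ) + 1 - k) *
      T ((m:ℤ) + 1 - k) * qb m (k - 1 - j) * qb m (k - 1 + j)) * hTjj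
  have hsplit : f (m+1) k
      = (∑ᶠ j : ℤ, (-1 : LP) ^ j.natAbs * T (j * (3 * j - 1) / 2) * qb m (k - j) * qb m (k + j))
        + ((∑ᶠ j : ℤ, T ((m:ℤ) + 1 - k) * ((-1 : LP) ^ j.natAbs * T (j * (3 * j - 1) / 2) * T (-j) *
            qb m (k - j) * qb m (k - 1 + j)))
          + ((∑ᶠ j : ℤ, T ((m:ℤ) + 1 - k) * ((-1 : LP) ^ j.natAbs * T (j * (3 * j - 1) / 2) * T j *
              qb m (k - 1 - j) * qb m (k + j)))
            + (∑ᶠ j : ℤ, (T ((m:ℤ) + 1 - k) * T ((m:ℤ) + 1 - k)) * ((-1 : LP) ^ j.natAbs *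
                T (j * (3 * j - 1) / 2) * qb m (k - 1 - j) * qb m (k - 1 + j))))) := by
    show (∑ᶠ j : ℤ, (-1 : LP) ^ j.natAbs * T (j * (3 * j - 1) / 2) * qb (m+1) (k - j) * qb (m+1) (k + j)) = _
    rw [finsum_congr hpt]
    rw [finsum_add_distrib hfin1 (fin_add (fin_mul_left _ hfinP)
      (fin_add (fin_mul_left _ hfinG) (fin_mul_left _ hfinR)))]
    rw [finsum_add_distrib (fin_mul_left _ hfinP)
      (fin_add (fin_mul_left _ hfinG) (fin_mul_left _ hfinR))]
    rw [finsum_add_distrib (fin_mul_left _ hfinG) (fin_mul_left _ hfinR)]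
  have hP0 : (∑ᶠ j : ℤ, (-1 : LP) ^ j.natAbs * T (j * (3 * j - 1) / 2) * T (-j) *
      qb m (k - j) * qb m (k - 1 + j)) = 0 := by
    apply finsum_antisym
    intro j
    rw [s_one_sub, e_one_sub, show -(1 - j) = j - 1 by ring,
      show k - (1 - j) = k - 1 + j by ring, show k - 1 + (1 - j) = k - j by ring]
    have hT : (T (j * (3 * j - 1) / 2 + (1 - 2 * j)) : LP) * T (j - 1)
        = T (j * (3 * j - 1) / 2) * T (-j) := by
      rw [← T_add, ← T_add]; congr 1; ring
    linear_combination (-((-1 : LP) ^ j.natAbs * qb m (k - 1 + j) * qb m (k - j))) * hT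
  have hG : (∑ᶠ j : ℤ, (-1 : LP) ^ j.natAbs * T (j * (3 * j - 1) / 2) * T j *
      qb m (k - 1 - j) * qb m (k + j))
      = ∑ᶠ j : ℤ, (-1 : LP) ^ j.natAbs * T (j * (3 * j - 1) / 2) * qb m (k - j) * qb m (k - 1 + j) := by
    rw [← finsum_reindex_neg (fun j : ℤ => (-1 : LP) ^ j.natAbs * T (j * (3 * j - 1) / 2) * T j *
      qb m (k - 1 - j) * qb m (k + j))]
    apply finsum_congr
    intro j
    rw [s_neg, e_neg, show k - 1 - -j = k - 1 + j by ring, show k + -j = k - j by ring]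
    have hT2 : (T (j * (3 * j - 1) / 2 + j) : LP) * T (-j) = T (j * (3 * j - 1) / 2) := by
      rw [← T_add]; congr 1; ring
    linear_combination ((-1 : LP) ^ j.natAbs * qb m (k - 1 + j) * qb m (k - j)) * hT2
  have h1 : (∑ᶠ j : ℤ, (-1 : LP) ^ j.natAbs * T (j * (3 * j - 1) / 2) * qb m (k - j) * qb m (k + j))
      = f m k := rfl
  have h4 : (∑ᶠ j : ℤ, (T ((m:ℤ) + 1 - k) * T ((m:ℤ) + 1 - k)) * ((-1 : LP) ^ j.natAbs *
      T (j * (3 * j - 1) / 2) * qb m (k - 1 - j) * qb m (k - 1 + j)))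
      = (T ((m:ℤ) + 1 - k) * T ((m:ℤ) + 1 - k)) * f m (k - 1) :=
    (mul_finsum _ _).symm
  rw [hsplit, h1, h4, ← mul_finsum _ (T ((m:ℤ) + 1 - k)),
    ← mul_finsum _ (T ((m:ℤ) + 1 - k)), hP0, hG, keyQ m k]
  ring


theorem stmt4 (n : ℕ) (hn : 1 ≤ n) (k : ℤ) :
    f n k = f (n - 1) k + T ((n : ℤ) - k) * f (n - 1) (k - 1) := by
  obtain ⟨m, rfl⟩ : ∃ m, n = m + 1 := ⟨n - 1, by omega⟩
  simp only [Nat.add_sub_cancel]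
  rw [show ((m + 1 : ℕ) : ℤ) - k = (m:ℤ) + 1 - k by push_cast; ring]
  exact key m k
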